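/- A Kleene algebra defined on an algebraic lattice has the interpolation property (for all prime filters P, Q with P ⊆ g(P), Q ⊆ g(Q), P ⊆ g(Q), and all a ∈ P, b ∈ Q: a ∧ b ≰ c(a) ∨ c(b)) if and only if it satisfies condition (M): for all completely join-irreducible p, q with p*, q* ≤ p, q there is a completely join-irreducible k with p*, q* ≤ k ≤ p, q. -/

import Mathlib

def CompletelyJoinIrreducible {A : Type*} [CompleteLattice A] (j : A) : Prop :=
  ∀ S : Set A, j = sSup S → j ∈ S

def star {A : Type*} [CompleteLattice A] (c : A → A) (j : A) : A :=
  sInf {x : A | ¬ x ≤ c j}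

/-- A prime filter of a lattice. -/
def IsPrimeFilter {A : Type*} [Lattice A] (P : Set A) : Prop :=
  P.Nonempty ∧ P ≠ Set.univ ∧
  (∀ a b : A, a ∈ P → a ≤ b → b ∈ P) ∧
  (∀ a b : A, a ∈ P → b ∈ P → a ⊓ b ∈ P) ∧
  (∀ a b : A, a ⊔ b ∈ P → a ∈ P ∨ b ∈ P)

/-- `g(P)` is the complement of the image `c(P)`; for an involution `c` this is
`{x : c x ∉ P}`. -/
def gflt {A : Type*} (c : A → A) (P : Set A) : Set A := {x | c x ∉ P}

section Aux

variable {A : Type*} [CompleteLattice A]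

lemma cji_ne_bot {j : A} (hj : CompletelyJoinIrreducible j) : j ≠ ⊥ := fun h => by
  simpa using hj ∅ (by simp [h])

lemma cji_compact [IsCompactlyGenerated A] {j : A} (hj : CompletelyJoinIrreducible j) :
    IsCompactElement j := by
  obtain ⟨s, hs, hsup⟩ := IsCompactlyGenerated.exists_sSup_eq j
  exact hs j (hj s hsup.symm)

lemma cji_prime (hdist : ∀ x y z : A, x ⊓ (y ⊔ z) = (x ⊓ y) ⊔ (x ⊓ z))
    {j u v : A} (hj : CompletelyJoinIrreducible j) (h : j ≤ u ⊔ v) : j ≤ u ∨ j ≤ v := by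
  have h1 : j = sSup {j ⊓ u, j ⊓ v} := by
    rw [sSup_pair, ← hdist, inf_eq_left.mpr h]
  rcases hj _ h1 with h2 | h2
  · left
    conv_lhs => rw [h2]
    exact inf_le_right
  · right
    conv_lhs => rw [h2]
    exact inf_le_right

lemma cji_cprime [IsCompactlyGenerated A]
    (hdist : ∀ x y z : A, x ⊓ (y ⊔ z) = (x ⊓ y) ⊔ (x ⊓ z))
    {j : A} (hj : CompletelyJoinIrreducible j) {S : Set A}
    (h : j ≤ sSup S) : ∃ s ∈ S, j ≤ s := by
  obtain ⟨t, htS, hle⟩ :=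
    (CompleteLattice.isCompactElement_iff_exists_le_sSup_of_le_sSup A j).mp (cji_compact hj) S h
  clear h
  classical
  induction t using Finset.induction_on with
  | empty =>
      exfalso
      exact cji_ne_bot hj (le_bot_iff.mp (by simpa using hle))
  | insert a t hnotmem ih =>
      rw [Finset.sup_insert] at hle
      have haS : a ∈ S := htS (Finset.mem_insert_self a t)
      rcases cji_prime hdist hj hle with h1 | h1
      · exact ⟨a, haS, h1⟩
      · exact ih (fun x hx => htS (Finset.mem_insert_of_mem hx)) h1

end Aux

section Kleene

variable {A : Type*} [CompleteLattice A] (c : A → A)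
variable (hinv : ∀ x, c (c x) = x) (hanti : ∀ x y : A, x ≤ y ↔ c y ≤ c x)

include hinv hanti

/-- flipping lemma -/
lemma c_flip {x y : A} (h : x ≤ c y) : y ≤ c x := by
  have := (hanti x (c y)).mp h
  rwa [hinv] at this

lemma c_mono {x y : A} (h : x ≤ y) : c y ≤ c x := (hanti x y).mp h

/-- `star c p ≤ x` whenever `x ≰ c p`. -/
lemma star_le_of_not_le {p x : A} (h : ¬ x ≤ c p) : star c p ≤ x := sInf_le h

lemma star_not_le_c [IsCompactlyGenerated A]
    (hdist : ∀ x y z : A, x ⊓ (y ⊔ z) = (x ⊓ y) ⊔ (x ⊓ z))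
    {p : A} (hp : CompletelyJoinIrreducible p) : ¬ star c p ≤ c p := by
  intro hle
  set T : Set A := {x : A | ¬ x ≤ c p} with hT
  have h1 : p ≤ c (star c p) := c_flip c hinv hanti hle
  have h2 : c (sInf T) ≤ sSup (c '' T) := by
    have h3 : c (sSup (c '' T)) ≤ sInf T := by
      refine le_sInf fun x hx => ?_
      have : c x ≤ sSup (c '' T) := le_sSup ⟨x, hx, rfl⟩
      have := c_mono c hinv hanti this
      rwa [hinv] at this
    have := c_mono c hinv hanti h3
    rwa [hinv] at this
  have h4 : p ≤ sSup (c '' T) := le_trans h1 h2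
  obtain ⟨y, ⟨x, hxT, rfl⟩, hpy⟩ := cji_cprime hdist hp h4
  exact hxT (c_flip c hinv hanti hpy)

/-- Density: below any `x ≰ y` there is a completely join-irreducible not below `y`. -/
lemma cji_dense [IsCompactlyGenerated A] {x y : A} (h : ¬ x ≤ y) :
    ∃ j : A, CompletelyJoinIrreducible j ∧ j ≤ x ∧ ¬ j ≤ y := by
  -- find a "cocompact" element m ≥ y with x ≰ m
  have hc : ¬ c y ≤ c x := fun hcc => h (by
    have := c_mono c hinv hanti hcc
    rwa [hinv, hinv] at this)
  obtain ⟨s, hs, hsup⟩ := IsCompactlyGenerated.exists_sSup_eq (c y)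
  have hexk : ∃ k ∈ s, ¬ k ≤ c x := by
    by_contra hall
    push_neg at hall
    exact hc (hsup ▸ sSup_le hall)
  obtain ⟨k, hks, hkx⟩ := hexk
  have hkcy : k ≤ c y := hsup ▸ le_sSup hks
  have hkcompact := hs k hks
  set m : A := c k with hm
  have hym : y ≤ m := c_flip c hinv hanti hkcy
  have hxm : ¬ x ≤ m := fun hxm => hkx (c_flip c hinv hanti hxm)
  -- Zorn in the dual order: find a minimal element of Z
  set Z : Set Aᵒᵈ := {z : Aᵒᵈ | OrderDual.ofDual z ≤ x ∧ ¬ OrderDual.ofDual z ≤ m} with hZ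
  have hxZ : OrderDual.toDual x ∈ Z := ⟨le_rfl, hxm⟩
  obtain ⟨j, hjZ⟩ : ∃ j, Maximal (· ∈ Z) j := by
    apply zorn_le₀
    intro C hCZ hC
    rcases C.eq_empty_or_nonempty with rfl | ⟨z₀, hz₀⟩
    · exact ⟨OrderDual.toDual x, hxZ, fun z hz => absurd hz (Set.notMem_empty z)⟩
    · -- lower bound is the infimum in A
      set C' : Set A := OrderDual.ofDual '' C with hC'
      have hC'ne : C'.Nonempty := ⟨OrderDual.ofDual z₀, z₀, hz₀, rfl⟩
      refine ⟨OrderDual.toDual (sInf C'), ⟨?_, ?_⟩, ?_⟩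
      · exact le_trans (sInf_le ⟨z₀, hz₀, rfl⟩) (hCZ hz₀).1
      · -- ¬ sInf C' ≤ m, using compactness of k
        intro hinf
        have hk' : k ≤ sSup (c '' C') := by
          have h5 : k ≤ c (sInf C') := c_flip c hinv hanti (show sInf C' ≤ c k from hinf)
          refine le_trans h5 ?_
          have h3 : c (sSup (c '' C')) ≤ sInf C' := by
            refine le_sInf fun u hu => ?_
            have : c u ≤ sSup (c '' C') := le_sSup ⟨u, hu, rfl⟩
            have := c_mono c hinv hanti this
            rwa [hinv] at this
          have := c_mono c hinv hanti h3
          rwa [hinv] at this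
        have hdir : DirectedOn (· ≤ ·) (c '' C') := by
          rintro _ ⟨u, hu, rfl⟩ _ ⟨v, hv, rfl⟩
          obtain ⟨zu, hzu, rfl⟩ := hu
          obtain ⟨zv, hzv, rfl⟩ := hv
          rcases eq_or_ne zu zv with rfl | hne
          · exact ⟨c (OrderDual.ofDual zu), ⟨_, ⟨zu, hzu, rfl⟩, rfl⟩, le_rfl, le_rfl⟩
          · rcases hC hzu hzv hne with hle | hle
            · exact ⟨c (OrderDual.ofDual zv), ⟨_, ⟨zv, hzv, rfl⟩, rfl⟩,
                c_mono c hinv hanti (show OrderDual.ofDual zv ≤ OrderDual.ofDual zu from hle),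
                le_rfl⟩
            · exact ⟨c (OrderDual.ofDual zu), ⟨_, ⟨zu, hzu, rfl⟩, rfl⟩, le_rfl,
                c_mono c hinv hanti (show OrderDual.ofDual zu ≤ OrderDual.ofDual zv from hle)⟩
        have hne : (c '' C').Nonempty := ⟨c (OrderDual.ofDual z₀), _, ⟨z₀, hz₀, rfl⟩, rfl⟩
        obtain ⟨w, ⟨u, hu, rfl⟩, hkw⟩ :=
          (CompleteLattice.isCompactElement_iff_le_of_directed_sSup_le A k).mp
            hkcompact (c '' C') hne hdir hk'
        obtain ⟨z, hzC, rfl⟩ := hu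
        exact (hCZ hzC).2 (by
          have := c_flip c hinv hanti hkw
          rwa [← hm] at this)
      · -- lower bound property (in the dual order: upper bound)
        intro z hzC
        exact sInf_le ⟨z, hzC, rfl⟩
  -- j is completely join irreducible
  obtain ⟨⟨hjx, hjm⟩, hjmin⟩ := hjZ
  refine ⟨OrderDual.ofDual j, ?_, hjx, fun hjy => hjm (le_trans hjy hym)⟩
  intro S hjS
  by_contra hjnS
  apply hjm
  rw [hjS]
  refine sSup_le fun s hsS => ?_
  by_contra hsm
  have hsj : s ≤ OrderDual.ofDual j := hjS ▸ le_sSup hsS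
  have hZs : OrderDual.toDual s ∈ Z := ⟨le_trans hsj hjx, hsm⟩
  have h6 : OrderDual.ofDual j ≤ s := hjmin hZs hsj
  exact hjnS (by rw [le_antisymm h6 hsj]; exact hsS)

end Kleene

/-- For a Kleene algebra on an algebraic lattice, the interpolation property
(in Cignoli's prime-filter form) is equivalent to condition (M). -/
theorem interpolation_iff_condition_M {A : Type*}
    [CompleteLattice A] [IsCompactlyGenerated A]
    (hdist : ∀ x y z : A, x ⊓ (y ⊔ z) = (x ⊓ y) ⊔ (x ⊓ z))
    (c : A → A) (hinv : ∀ x, c (c x) = x)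
    (hanti : ∀ x y : A, x ≤ y ↔ c y ≤ c x)
    (hkl : ∀ x y : A, x ⊓ c x ≤ y ⊔ c y) :
    (∀ P Q : Set A, IsPrimeFilter P → IsPrimeFilter Q →
      P ⊆ gflt c P → Q ⊆ gflt c Q → P ⊆ gflt c Q →
      ∀ a ∈ P, ∀ b ∈ Q, ¬ a ⊓ b ≤ c a ⊔ c b) ↔
    (∀ p q : A, CompletelyJoinIrreducible p → CompletelyJoinIrreducible q →
      star c p ≤ p → star c p ≤ q → star c q ≤ p → star c q ≤ q →
      ∃ k : A, CompletelyJoinIrreducible k ∧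
        star c p ≤ k ∧ star c q ≤ k ∧ k ≤ p ∧ k ≤ q) := by
  have hflip : ∀ {x y : A}, x ≤ c y → y ≤ c x := fun h => c_flip c hinv hanti h
  constructor
  · -- interpolation → (M)
    intro hint p q hp hq hpp hpq hqp hqq
    have hpstar := star_not_le_c c hinv hanti hdist hp
    have hqstar := star_not_le_c c hinv hanti hdist hq
    have hpcp : ¬ p ≤ c p := fun h => hpstar (le_trans hpp h)
    have hqcq : ¬ q ≤ c q := fun h => hqstar (le_trans hqq h)
    have hpcq : ¬ p ≤ c q := fun h => hqstar (le_trans hqp h)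
    -- the principal filters on p and q
    have hPfilter : IsPrimeFilter {x : A | p ≤ x} := by
      refine ⟨⟨p, le_rfl⟩, ?_, fun a b ha hab => le_trans ha hab,
        fun a b ha hb => le_inf ha hb, fun a b hab => cji_prime hdist hp hab⟩
      intro h
      have : p ≤ ⊥ := by
        have : (⊥ : A) ∈ {x : A | p ≤ x} := h ▸ Set.mem_univ _
        exact this
      exact cji_ne_bot hp (le_bot_iff.mp this)
    have hQfilter : IsPrimeFilter {x : A | q ≤ x} := by
      refine ⟨⟨q, le_rfl⟩, ?_, fun a b ha hab => le_trans ha hab,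
        fun a b ha hb => le_inf ha hb, fun a b hab => cji_prime hdist hq hab⟩
      intro h
      have : q ≤ ⊥ := by
        have : (⊥ : A) ∈ {x : A | q ≤ x} := h ▸ Set.mem_univ _
        exact this
      exact cji_ne_bot hq (le_bot_iff.mp this)
    have h1 : {x : A | p ≤ x} ⊆ gflt c {x : A | p ≤ x} := by
      intro x hx hcx
      exact hpcp (le_trans hx (hflip hcx))
    have h2 : {x : A | q ≤ x} ⊆ gflt c {x : A | q ≤ x} := by
      intro x hx hcx
      exact hqcq (le_trans hx (hflip hcx))
    have h3 : {x : A | p ≤ x} ⊆ gflt c {x : A | q ≤ x} := by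
      intro x hx hcx
      exact hpcq (le_trans hx (hflip hcx))
    have hne := hint _ _ hPfilter hQfilter h1 h2 h3 p le_rfl q le_rfl
    obtain ⟨k, hk, hkpq, hkc⟩ := cji_dense c hinv hanti hne
    refine ⟨k, hk, ?_, ?_, le_trans hkpq inf_le_left, le_trans hkpq inf_le_right⟩
    · exact star_le_of_not_le c hinv hanti (fun h => hkc (le_trans h le_sup_left))
    · exact star_le_of_not_le c hinv hanti (fun h => hkc (le_trans h le_sup_right))
  · -- (M) → interpolation
    intro hM P Q hP hQ hPgP hQgQ hPgQ a haP b hbQ hcon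
    obtain ⟨-, -, hPup, -, hPprime⟩ := hP
    obtain ⟨-, -, hQup, -, hQprime⟩ := hQ
    -- basic exclusions
    have hcaP : c a ∉ P := hPgP haP
    have hcaQ : c a ∉ Q := hPgQ haP
    have hcbQ : c b ∉ Q := hQgQ hbQ
    have hcbP : c b ∉ P := fun h => by
      have := hPgQ h
      rw [gflt, Set.mem_setOf_eq, hinv] at this
      exact this hbQ
    set d : A := c a ⊔ c b with hd
    -- the "positive parts"
    set Sa : Set A := {j : A | CompletelyJoinIrreducible j ∧ j ≤ a ∧ ¬ j ≤ d} with hSa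
    set Sb : Set A := {j : A | CompletelyJoinIrreducible j ∧ j ≤ b ∧ ¬ j ≤ d} with hSb
    have hade : a ≤ d ⊔ sSup Sa := by
      by_contra hna
      obtain ⟨j, hj, hja, hjd⟩ := cji_dense c hinv hanti hna
      have hjSa : j ∈ Sa := ⟨hj, hja, fun h => hjd (le_trans h le_sup_left)⟩
      exact hjd (le_trans (le_sSup hjSa) le_sup_right)
    have hbde : b ≤ d ⊔ sSup Sb := by
      by_contra hnb
      obtain ⟨j, hj, hjb, hjd⟩ := cji_dense c hinv hanti hnb
      have hjSb : j ∈ Sb := ⟨hj, hjb, fun h => hjd (le_trans h le_sup_left)⟩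
      exact hjd (le_trans (le_sSup hjSb) le_sup_right)
    have haP' : sSup Sa ∈ P := by
      have h0 : c a ⊔ (c b ⊔ sSup Sa) ∈ P :=
        hPup a _ haP (by rw [← sup_assoc]; exact hade)
      rcases hPprime _ _ h0 with h1 | h1
      · exact absurd h1 hcaP
      rcases hPprime _ _ h1 with h2 | h2
      · exact absurd h2 hcbP
      · exact h2
    have hbQ' : sSup Sb ∈ Q := by
      have h0 : c a ⊔ (c b ⊔ sSup Sb) ∈ Q :=
        hQup b _ hbQ (by rw [← sup_assoc]; exact hbde)
      rcases hQprime _ _ h0 with h1 | h1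
      · exact absurd h1 hcaQ
      rcases hQprime _ _ h1 with h2 | h2
      · exact absurd h2 hcbQ
      · exact h2
    by_cases hpair : ∃ p ∈ Sa, ∃ q ∈ Sb, ¬ q ≤ c p
    · -- apply condition (M) to get a contradiction
      obtain ⟨p, ⟨hpj, hpa, hpd⟩, q, ⟨hqj, hqb, hqd⟩, hqcp⟩ := hpair
      -- p and q are "positive"
      have hppos : ¬ p ≤ c p := by
        intro h
        apply hpd
        have : p ≤ (a ⊓ b) ⊔ c (a ⊓ b) := by
          have := hkl p (a ⊓ b)
          rwa [inf_eq_left.mpr h] at this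
        have hcab : c (a ⊓ b) = c a ⊔ c b := by
          apply le_antisymm
          · have h1 : c (c a ⊔ c b) ≤ a ⊓ b := by
              refine le_inf ?_ ?_
              · have := c_mono c hinv hanti (le_sup_left : c a ≤ c a ⊔ c b)
                rwa [hinv] at this
              · have := c_mono c hinv hanti (le_sup_right : c b ≤ c a ⊔ c b)
                rwa [hinv] at this
            have := c_mono c hinv hanti h1
            rwa [hinv] at this
          · refine sup_le ?_ ?_
            · exact c_mono c hinv hanti inf_le_left
            · exact c_mono c hinv hanti inf_le_right
        rw [hcab] at this
        calc p ≤ (a ⊓ b) ⊔ (c a ⊔ c b) := this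
          _ ≤ d := sup_le hcon le_rfl
      have hqpos : ¬ q ≤ c q := by
        intro h
        apply hqd
        have : q ≤ (a ⊓ b) ⊔ c (a ⊓ b) := by
          have := hkl q (a ⊓ b)
          rwa [inf_eq_left.mpr h] at this
        have hcab : c (a ⊓ b) = c a ⊔ c b := by
          apply le_antisymm
          · have h1 : c (c a ⊔ c b) ≤ a ⊓ b := by
              refine le_inf ?_ ?_
              · have := c_mono c hinv hanti (le_sup_left : c a ≤ c a ⊔ c b)
                rwa [hinv] at this
              · have := c_mono c hinv hanti (le_sup_right : c b ≤ c a ⊔ c b)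
                rwa [hinv] at this
            have := c_mono c hinv hanti h1
            rwa [hinv] at this
          · refine sup_le ?_ ?_
            · exact c_mono c hinv hanti inf_le_left
            · exact c_mono c hinv hanti inf_le_right
        rw [hcab] at this
        calc q ≤ (a ⊓ b) ⊔ (c a ⊔ c b) := this
          _ ≤ d := sup_le hcon le_rfl
      have hpcq : ¬ p ≤ c q := fun h => hqcp (hflip h)
      obtain ⟨k, hkj, hpk, hqk, hkp, hkq⟩ :=
        hM p q hpj hqj (star_le_of_not_le c hinv hanti hppos)
          (star_le_of_not_le c hinv hanti hqcp)
          (star_le_of_not_le c hinv hanti hpcq)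
          (star_le_of_not_le c hinv hanti hqpos)
      have hkd : k ≤ c a ⊔ c b := le_trans (le_inf (le_trans hkp hpa) (le_trans hkq hqb)) hcon
      rcases cji_prime hdist hkj hkd with h1 | h1
      · -- star c p ≤ c p, contradiction
        exact star_not_le_c c hinv hanti hdist hpj
          (le_trans hpk (le_trans h1 (c_mono c hinv hanti hpa)))
      · exact star_not_le_c c hinv hanti hdist hqj
          (le_trans hqk (le_trans h1 (c_mono c hinv hanti hqb)))
    · -- the failure case contradicts the filter conditions
      push_neg at hpair
      have hba : sSup Sa ≤ c (sSup Sb) := by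
        refine sSup_le fun p hpSa => ?_
        refine hflip (sSup_le fun q hqSb => ?_)
        exact hpair p hpSa q hqSb
      have : c (sSup Sb) ∈ P := hPup _ _ haP' hba
      have := hPgQ this
      rw [gflt, Set.mem_setOf_eq, hinv] at this
      exact this hbQ'
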